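/- If g₁ is a symmetric Boolean function on t variables obtained as a restriction of a Boolean function f, and g₁ is non-constant, then s(f) ≥ t/2. -/

import Mathlib

open Finset

/-- The sensitivity of `f` at input `x`: the number of coordinates whose flip changes `f`. -/
def sensAt {ι : Type} [Fintype ι] [DecidableEq ι] (f : (ι → Bool) → Bool) (x : ι → Bool) : ℕ :=
  (Finset.univ.filter fun i => f (Function.update x i (!x i)) ≠ f x).card

/-- The sensitivity of `f`: the maximum of `sensAt f x` over all inputs `x`. -/
def sensitivity {ι : Type} [Fintype ι] [DecidableEq ι] (f : (ι → Bool) → Bool) : ℕ :=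
  Finset.univ.sup fun x => sensAt f x

/-- Flip the coordinates of `x` in the block `B`. -/
def flipBlock {ι : Type} [DecidableEq ι] (x : ι → Bool) (B : Finset ι) : ι → Bool :=
  fun i => if i ∈ B then !x i else x i

/-- The block sensitivity of `f` at `x`. -/
noncomputable def blockSensAt {ι : Type} [Fintype ι] [DecidableEq ι] (f : (ι → Bool) → Bool)
    (x : ι → Bool) : ℕ :=
  sSup {r | ∃ B : Fin r → Finset ι,
    (∀ i j, i ≠ j → Disjoint (B i) (B j)) ∧ ∀ j, f (flipBlock x (B j)) ≠ f x}

/-- The block sensitivity of `f`. -/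
noncomputable def blockSens {ι : Type} [Fintype ι] [DecidableEq ι] (f : (ι → Bool) → Bool) : ℕ :=
  Finset.univ.sup fun x => blockSensAt f x

/-- The support of a partial assignment `p : ι → Option Bool`. -/
def psupport {ι : Type} [Fintype ι] [DecidableEq ι] (p : ι → Option Bool) : Finset ι :=
  Finset.univ.filter fun i => p i ≠ none

/-- `x` is consistent with the partial assignment `p`. -/
def consistentWith {ι : Type} (x : ι → Bool) (p : ι → Option Bool) : Prop :=
  ∀ i b, p i = some b → x i = b

/-- `p` is a `b`-certificate for `f`. -/
def isCertificate {ι : Type} (f : (ι → Bool) → Bool) (p : ι → Option Bool) (b : Bool) : Prop :=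
  ∀ x, consistentWith x p → f x = b

/-- The certificate complexity of `f` at `x`. -/
noncomputable def certAt {ι : Type} [Fintype ι] [DecidableEq ι] (f : (ι → Bool) → Bool) (x : ι → Bool) : ℕ :=
  sInf {c | ∃ p, consistentWith x p ∧ isCertificate f p (f x) ∧ (psupport p).card = c}

/-- The certificate complexity of `f`. -/
noncomputable def certC {ι : Type} [Fintype ι] [DecidableEq ι] (f : (ι → Bool) → Bool) : ℕ :=
  Finset.univ.sup fun x => certAt f x

/-- The `b`-sensitivity of `f`: max of `sensAt f x` over inputs `x` with `f x = b`. -/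
def sensB {ι : Type} [Fintype ι] [DecidableEq ι] (b : Bool) (f : (ι → Bool) → Bool) : ℕ :=
  (Finset.univ.filter fun x => f x = b).sup fun x => sensAt f x

/-- The `b`-certificate complexity of `f`. -/
noncomputable def certB {ι : Type} [Fintype ι] [DecidableEq ι] (b : Bool) (f : (ι → Bool) → Bool) : ℕ :=
  (Finset.univ.filter fun x => f x = b).sup fun x => certAt f x

/-- The partial assignment obtained by permuting the coordinates of `p` by `σ`. -/
def permP {ι : Type} (σ : Equiv.Perm ι) (p : ι → Option Bool) : ι → Option Bool :=
  fun i => p (σ i)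

/-- Distance between partial assignments: number of coordinates on which both are set
and they disagree. -/
def pdist {ι : Type} [Fintype ι] [DecidableEq ι] (p p' : ι → Option Bool) : ℕ :=
  (Finset.univ.filter fun i =>
    (p i = some true ∧ p' i = some false) ∨ (p i = some false ∧ p' i = some true)).card

/-- Edges of a `k`-uniform hypergraph on vertex set `Fin n`: `k`-element subsets. -/
def Edge (n k : ℕ) : Type := {S : Finset (Fin n) // S.card = k}

instance (n k : ℕ) : DecidableEq (Edge n k) := by unfold Edge; infer_instance
instance (n k : ℕ) : Fintype (Edge n k) := by unfold Edge; infer_instance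

/-- The action of a vertex permutation on edges. -/
def edgeMap {n k : ℕ} (σ : Equiv.Perm (Fin n)) (e : Edge n k) : Edge n k :=
  ⟨e.1.image σ, by rw [Finset.card_image_of_injective _ σ.injective]; exact e.2⟩

/-- `f` is a `k`-uniform hypergraph property: it is invariant under vertex permutations. -/
def IsHypergraphProperty {n k : ℕ} (f : (Edge n k → Bool) → Bool) : Prop :=
  ∀ (σ : Equiv.Perm (Fin n)) (x : Edge n k → Bool), f (fun e => x (edgeMap σ e)) = f x

/-- The number of edges of a hypergraph given by its edge-indicator vector. -/
def edgeCount {n k : ℕ} (G : Edge n k → Bool) : ℕ :=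
  (Finset.univ.filter fun e => G e = true).card

/-- The degree of a vertex `v` in the hypergraph `G`. -/
def degree {n k : ℕ} (G : Edge n k → Bool) (v : Fin n) : ℕ :=
  (Finset.univ.filter fun e : Edge n k => G e = true ∧ v ∈ e.1).card

/-- Invariance of a `k`-partite `k`-uniform hypergraph property under independent
permutations of each coordinate. -/
def IsPartiteProperty {n k : ℕ} (f : ((Fin k → Fin n) → Bool) → Bool) : Prop :=
  ∀ (σ : Fin k → Equiv.Perm (Fin n)) (x : (Fin k → Fin n) → Bool),
    f (fun e => x fun i => σ i (e i)) = f x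

lemma extend_update_aux {m t : ℕ} (e : Fin t → Fin m) (he : Function.Injective e)
    (x : Fin t → Bool) (y : Fin m → Bool) (i : Fin t) (b : Bool) :
    Function.extend e (Function.update x i b) y
      = Function.update (Function.extend e x y) (e i) b := by
  funext j
  by_cases hj : ∃ k, e k = j
  · obtain ⟨k, rfl⟩ := hj
    by_cases hk : k = i
    · subst hk
      simp [he.extend_apply]
    · rw [he.extend_apply, Function.update_of_ne hk,
        Function.update_of_ne (show e k ≠ e i from fun h => hk (he h)), he.extend_apply]
  · have hji : j ≠ e i := fun h => hj ⟨i, h.symm⟩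
    rw [Function.extend_apply' _ _ _ hj, Function.update_of_ne hji,
      Function.extend_apply' _ _ _ hj]

lemma sensAt_restrict_le {m t : ℕ} (f : (Fin m → Bool) → Bool) (g : (Fin t → Bool) → Bool)
    (e : Fin t → Fin m) (he : Function.Injective e) (y : Fin m → Bool)
    (hres : ∀ x, g x = f (Function.extend e x y)) (x : Fin t → Bool) :
    sensAt g x ≤ sensAt f (Function.extend e x y) := by
  unfold sensAt
  apply Finset.card_le_card_of_injOn e
  · intro i hi
    simp only [Finset.mem_coe, Finset.mem_filter, Finset.mem_univ, true_and] at hi ⊢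
    rw [he.extend_apply]
    rw [hres, hres, extend_update_aux e he] at hi
    exact hi
  · intro i _ j _ h
    exact he h

lemma exists_sens_pair {t : ℕ} (g : (Fin t → Bool) → Bool) :
    ∀ n (x y : Fin t → Bool), (Finset.univ.filter fun i => x i ≠ y i).card = n →
      g x ≠ g y → ∃ a i, g (Function.update a i (!a i)) ≠ g a := by
  intro n
  induction n with
  | zero =>
    intro x y hc h
    exfalso
    apply h
    congr 1
    funext i
    by_contra hi
    have : i ∈ Finset.univ.filter fun i => x i ≠ y i := by simp [hi]
    rw [Finset.card_eq_zero] at hc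
    simp [hc] at this
  | succ n ih =>
    intro x y hc h
    have hne : (Finset.univ.filter fun i => x i ≠ y i).Nonempty := by
      rw [← Finset.card_pos, hc]; omega
    obtain ⟨i, hi⟩ := hne
    simp only [Finset.mem_filter, Finset.mem_univ, true_and] at hi
    set x' := Function.update x i (y i) with hx'
    by_cases hg : g x' = g x
    · refine ih x' y ?_ (by rw [hg]; exact h)
      have heq : (Finset.univ.filter fun j => x' j ≠ y j)
          = (Finset.univ.filter fun j => x j ≠ y j).erase i := by
        ext j
        simp only [Finset.mem_filter, Finset.mem_univ, true_and, Finset.mem_erase]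
        by_cases hji : j = i
        · subst hji; simp [hx']
        · simp [hx', Function.update_of_ne hji, hji]
      rw [heq, Finset.card_erase_of_mem (by simp [hi]), hc]
      omega
    · refine ⟨x, i, ?_⟩
      have : y i = !x i := by
        cases hxi : x i <;> cases hyi : y i <;> simp_all
      rw [← this]
      exact hg

/-- if a non-constant symmetric function on t variables is a restriction
of f, then s(f) ≥ t/2. -/
theorem symmetric_restriction_lower_bound (m t : ℕ) (f : (Fin m → Bool) → Bool)
    (g : (Fin t → Bool) → Bool)
    (hsym : ∀ (σ : Equiv.Perm (Fin t)) (x : Fin t → Bool), g (fun i => x (σ i)) = g x)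
    (e : Fin t → Fin m) (he : Function.Injective e) (y : Fin m → Bool)
    (hres : ∀ x, g x = f (Function.extend e x y))
    (hnc : ∃ x y', g x ≠ g y') :
    (t : ℝ) / 2 ≤ (sensitivity f : ℝ) := by
  classical
  obtain ⟨x0, y0, hxy⟩ := hnc
  obtain ⟨a0, i, hedge0⟩ := exists_sens_pair g _ x0 y0 rfl hxy
  -- normalize to an edge with `a i = false`
  obtain ⟨a, hai, hedge⟩ : ∃ a : Fin t → Bool, a i = false ∧
      g (Function.update a i true) ≠ g a := by
    cases hA : a0 i with
    | false => exact ⟨a0, hA, by rw [hA] at hedge0; simpa using hedge0⟩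
    | true =>
      refine ⟨Function.update a0 i false, by simp, ?_⟩
      rw [Function.update_idem]
      rw [hA] at hedge0
      simp only [Bool.not_true] at hedge0
      have : Function.update a0 i true = a0 := by
        conv_rhs => rw [← Function.update_eq_self i a0]
        rw [hA]
      rw [this]
      exact fun h => hedge0 h.symm
  set b := Function.update a i true with hb
  have hbi : b i = true := by simp [hb]
  -- every false coordinate of `a` is sensitive at `a`
  have hA : ∀ j, a j = false → g (Function.update a j (!a j)) ≠ g a := by
    intro j hj
    rw [hj]
    by_cases hji : j = i
    · subst hji; simpa using hedge
    · have key : Function.update a j true = fun k => (Function.update a i true) (Equiv.swap i j k) := by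
        funext k
        by_cases hk : k = i
        · subst hk
          rw [Equiv.swap_apply_left, Function.update_of_ne (Ne.symm hji),
            Function.update_of_ne hji, hj, hai]
        · by_cases hk' : k = j
          · subst hk'
            rw [Equiv.swap_apply_right]
            simp
          · rw [Equiv.swap_apply_of_ne_of_ne hk hk', Function.update_of_ne hk',
              Function.update_of_ne hk]
      simp only [Bool.not_false]
      rw [key, hsym (Equiv.swap i j) (Function.update a i true)]
      exact hedge
  -- every true coordinate of `b` is sensitive at `b`
  have hB : ∀ j, b j = true → g (Function.update b j (!b j)) ≠ g b := by
    intro j hj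
    rw [hj]
    simp only [Bool.not_true]
    by_cases hji : j = i
    · subst hji
      have : Function.update b j false = a := by
        rw [hb, Function.update_idem]
        conv_rhs => rw [← Function.update_eq_self j a]
        rw [hai]
      rw [this]
      exact fun h => hedge h.symm
    · have haj : a j = true := by
        rw [hb] at hj
        rwa [Function.update_of_ne hji] at hj
      have key : Function.update b j false = fun k => a (Equiv.swap i j k) := by
        funext k
        by_cases hk : k = i
        · subst hk
          rw [Equiv.swap_apply_left, Function.update_of_ne (Ne.symm hji), hbi, haj]
        · by_cases hk' : k = j
          · subst hk'
            rw [Equiv.swap_apply_right, hai]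
            simp
          · rw [Equiv.swap_apply_of_ne_of_ne hk hk', Function.update_of_ne hk', hb,
              Function.update_of_ne hk]
      rw [key, hsym (Equiv.swap i j) a]
      exact fun h => hedge h.symm
  -- card bounds
  have hcardA : (Finset.univ.filter fun j => a j = false).card ≤ sensAt g a := by
    apply Finset.card_le_card
    intro j hj
    simp only [Finset.mem_filter, Finset.mem_univ, true_and] at hj ⊢
    exact hA j hj
  have hcardB : (Finset.univ.filter fun j => b j = true).card ≤ sensAt g b := by
    apply Finset.card_le_card
    intro j hj
    simp only [Finset.mem_filter, Finset.mem_univ, true_and] at hj ⊢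
    exact hB j hj
  have hunion : (Finset.univ.filter fun j => a j = false) ∪
      (Finset.univ.filter fun j => b j = true) = Finset.univ := by
    ext j
    simp only [Finset.mem_union, Finset.mem_filter, Finset.mem_univ, true_and, iff_true]
    cases hj : a j with
    | false => exact Or.inl rfl
    | true =>
      refine Or.inr ?_
      by_cases hji : j = i
      · subst hji; exact hbi
      · rw [hb, Function.update_of_ne hji]; exact hj
  have htsum : t ≤ (Finset.univ.filter fun j => a j = false).card +
      (Finset.univ.filter fun j => b j = true).card := by
    calc t = (Finset.univ : Finset (Fin t)).card := by simp
    _ = ((Finset.univ.filter fun j => a j = false) ∪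
        (Finset.univ.filter fun j => b j = true)).card := by rw [hunion]
    _ ≤ _ := Finset.card_union_le _ _
  have hsf : ∀ x : Fin t → Bool, sensAt g x ≤ sensitivity f := by
    intro x
    calc sensAt g x ≤ sensAt f (Function.extend e x y) :=
      sensAt_restrict_le f g e he y hres x
    _ ≤ sensitivity f := Finset.le_sup (Finset.mem_univ _)
  have ht2 : t ≤ 2 * sensitivity f := by
    have h1 := hsf a
    have h2 := hsf b
    omega
  have : (t : ℝ) ≤ 2 * (sensitivity f : ℝ) := by exact_mod_cast ht2
  linarith
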